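/- arXiv:1101.2116 — 2 statements merged into one kernel-verified Lean document; each statement's English description precedes it below -/
import Mathlib

section
/- Let (L,μ) be a valued field with value group Γ_L and residue field ℓ, let ≤_ℓ be a linear order making ℓ an ordered field, and let p₁,…,p_t ∈ L× with γ_i = μ(p_i) such that the images of γ₁,…,γ_t in Γ_L/2Γ_L are linearly independent over ℤ/2ℤ. Then there exists a linear order ≤_L making L an ordered field which induces ≤_ℓ on ℓ and such that p_i ≥_L 0 for every 1 ≤ i ≤ t. -/
universe u v w

open MvPolynomial

/-- A (linear) field ordering, given by its cone of non-negative elements.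
This is equivalent to a linear order making the field an ordered field. -/
structure FieldOrdering (L : Type*) [Field L] where
  P : Set L
  add_mem : ∀ x ∈ P, ∀ y ∈ P, x + y ∈ P
  mul_mem : ∀ x ∈ P, ∀ y ∈ P, x * y ∈ P
  square_mem : ∀ x : L, x * x ∈ P
  neg_one_not_mem : (-1 : L) ∉ P
  total : ∀ x : L, x ∈ P ∨ -x ∈ P

/-- `x >_L 0` for a field ordering. -/
def FieldOrdering.Pos {L : Type*} [Field L] (O : FieldOrdering L) (x : L) : Prop :=
  x ∈ O.P ∧ x ≠ 0

/-- An ordering on a valued field is compatible with the (multiplicative) valuation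
if `0 < x < y` implies `w x ≤ w y` (i.e. the additive valuation of `x` is at least
that of `y`); equivalently, the valuation ring is convex. -/
def FieldOrdering.IsCompatible {L : Type*} [Field L] {Γ : Type*}
    [LinearOrderedCommGroupWithZero Γ] (O : FieldOrdering L) (w : Valuation L Γ) : Prop :=
  ∀ x y : L, O.Pos x → O.Pos (y - x) → w x ≤ w y

/-- A field `K` is real closed: every nonnegative element is a square and every
polynomial of odd degree has a root. -/
def IsRealClosedField (K : Type*) [Field K] [LinearOrder K] [IsStrictOrderedRing K] : Prop :=
  (∀ x : K, 0 ≤ x → ∃ y : K, y * y = x) ∧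
    ∀ p : Polynomial K, Odd p.natDegree → ∃ x : K, p.IsRoot x

/-- `(K, ≤, ν)` is a real closed valued field: `K` is real closed and the
valuation ring of `ν` is convex (`0 < x < y → ν x ≤ ν y` multiplicatively). -/
def IsRCVF {K : Type*} [Field K] [LinearOrder K] [IsStrictOrderedRing K] {Γ₀ : Type*}
    [LinearOrderedCommGroupWithZero Γ₀] (ν : Valuation K Γ₀) : Prop :=
  IsRealClosedField K ∧ ∀ x y : K, 0 < x → x < y → ν x ≤ ν y

/-- The field of rational functions in `n` variables over `K`. -/
abbrev RatFuncField (K : Type u) [Field K] (n : ℕ) : Type u :=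
  FractionRing (MvPolynomial (Fin n) K)

/-- `f = q/r` with `r b ≠ 0` and `v = q b / r b`; i.e. `f` is defined at `b` with value `v`. -/
def HasEvalAt {K : Type u} [Field K] {n : ℕ} (f : RatFuncField K n) (b : Fin n → K) (v : K) :
    Prop :=
  ∃ q r : MvPolynomial (Fin n) K, eval b r ≠ 0 ∧
    f = algebraMap (MvPolynomial (Fin n) K) (RatFuncField K n) q /
      algebraMap (MvPolynomial (Fin n) K) (RatFuncField K n) r ∧
    v = eval b q / eval b r

/-- `f` is defined at `b`. -/
def IsDefinedAt {K : Type u} [Field K] {n : ℕ} (f : RatFuncField K n) (b : Fin n → K) : Prop :=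
  ∃ v : K, HasEvalAt f b v

/-- A valuation `w` on an extension field extends `ν` if the valuation ring of `w`
intersected with `K` is the valuation ring of `ν`. -/
def ValExtends {K L : Type*} [Field K] [Field L] [Algebra K L] {Γ₀ Γ : Type*}
    [LinearOrderedCommGroupWithZero Γ₀] [LinearOrderedCommGroupWithZero Γ]
    (ν : Valuation K Γ₀) (w : Valuation L Γ) : Prop :=
  ∀ a : K, w (algebraMap K L a) ≤ 1 ↔ ν a ≤ 1

/-- An OVF-valuation on `L` (over `(K,ν)`): a valuation extending `ν` admitting a
compatible field ordering. -/
def IsOVFValuation {K L : Type*} [Field K] [Field L] [Algebra K L] {Γ₀ Γ : Type*}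
    [LinearOrderedCommGroupWithZero Γ₀] [LinearOrderedCommGroupWithZero Γ]
    (ν : Valuation K Γ₀) (w : Valuation L Γ) : Prop :=
  ValExtends ν w ∧ ∃ O : FieldOrdering L, O.IsCompatible w

/-- A valuation on `K(x₁,…,xₙ)` is near `b ∈ Kⁿ` if every rational function defined
at `b` and vanishing at `b` has valuation above every element of the value group of `K`
(multiplicatively: `w f < w a` for every nonzero `a ∈ K`). -/
def IsNear {K : Type u} [Field K] {n : ℕ} {Γ : Type*} [LinearOrderedCommGroupWithZero Γ]
    (w : Valuation (RatFuncField K n) Γ) (b : Fin n → K) : Prop :=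
  ∀ f : RatFuncField K n, HasEvalAt f b 0 →
    ∀ a : K, a ≠ 0 → w f < w (algebraMap K (RatFuncField K n) a)

/-- `f` is OVF-integral at `b`: every OVF-valuation near `b` takes `f` into its
valuation ring. -/
def IsOVFIntegralAt {K : Type u} [Field K] {Γ₀ : Type v} [LinearOrderedCommGroupWithZero Γ₀]
    {n : ℕ} (ν : Valuation K Γ₀) (f : RatFuncField K n) (b : Fin n → K) : Prop :=
  ∀ (Γ : Type w) (_ : LinearOrderedCommGroupWithZero Γ)
    (wb : Valuation (RatFuncField K n) Γ),
    IsOVFValuation ν wb → IsNear wb b → wb f ≤ 1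

/-- `Cone P`: the smallest subset of `L` containing `P` and all squares of nonzero
elements which is closed under addition and multiplication. -/
inductive InCone {L : Type*} [Field L] (P : Set L) : L → Prop
  | mem : ∀ x ∈ P, InCone P x
  | sq : ∀ x : L, x ≠ 0 → InCone P (x * x)
  | add : ∀ x y : L, InCone P x → InCone P y → InCone P (x + y)
  | mul : ∀ x y : L, InCone P x → InCone P y → InCone P (x * y)

/-- The open semi-algebraic set `S_p̄ = {b | p_i(b) > 0 for all i}`. -/
def SetSP {K : Type u} [Field K] [LinearOrder K] [IsStrictOrderedRing K] {n m : ℕ}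
    (p : Fin m → MvPolynomial (Fin n) K) : Set (Fin n → K) :=
  {b | ∀ i, 0 < eval b (p i)}

/-- The set `I_p̄ = { 1/(1+f) : f ∈ Cone({p₁,…,p_m}) }` inside `K(x₁,…,xₙ)`. -/
def SetIP {K : Type u} [Field K] {n m : ℕ} (p : Fin m → MvPolynomial (Fin n) K) :
    Set (RatFuncField K n) :=
  {g | ∃ f : RatFuncField K n,
    InCone (Set.range fun i => algebraMap (MvPolynomial (Fin n) K) (RatFuncField K n) (p i)) f ∧
    g = (1 + f)⁻¹}

/-- The `O_ν`-subalgebra of `K(x₁,…,xₙ)` generated by a set `I` (as a subring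
generated by `I` together with the image of `O_ν`). -/
noncomputable def OAlgebraGen {K : Type u} [Field K] {Γ₀ : Type v} [LinearOrderedCommGroupWithZero Γ₀]
    (ν : Valuation K Γ₀) {n : ℕ} (I : Set (RatFuncField K n)) : Subring (RatFuncField K n) :=
  Subring.closure ((algebraMap K (RatFuncField K n) '' {a : K | ν a ≤ 1}) ∪ I)



/-- The multiplicative set `T = {1 + m·a : m ∈ M_ν, a ∈ A}` used for the integral radical. -/
def SetT {K : Type u} [Field K] {Γ₀ : Type v} [LinearOrderedCommGroupWithZero Γ₀]
    (ν : Valuation K Γ₀) {n : ℕ} (A : Subring (RatFuncField K n)) :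
    Set (RatFuncField K n) :=
  {t | ∃ m : K, ν m < 1 ∧ ∃ a ∈ A, t = 1 + algebraMap K (RatFuncField K n) m * a}

/-- The localization `A_T` of `A` at `T`, realized inside `L` as the subring generated
by `A` together with the inverses of the elements of `T`. -/
noncomputable def LocAT {K : Type u} [Field K] {n : ℕ}
    (A : Subring (RatFuncField K n)) (T : Set (RatFuncField K n)) :
    Subring (RatFuncField K n) :=
  Subring.closure ((A : Set (RatFuncField K n)) ∪ ((fun t => t⁻¹) '' T))

/-- The integral radical of `A`: the integral closure in `L` of the localization `A_T`. -/
noncomputable def IntegralRadical {K : Type u} [Field K] {Γ₀ : Type v}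
    [LinearOrderedCommGroupWithZero Γ₀] (ν : Valuation K Γ₀) {n : ℕ}
    (A : Subring (RatFuncField K n)) : Set (RatFuncField K n) :=
  (integralClosure (LocAT A (SetT ν A)) (RatFuncField K n) :
    Subalgebra (LocAT A (SetT ν A)) (RatFuncField K n))

/-- A semi-section of a valued field `(L, μ)` (with `μ` surjective, so that the nonzero
elements of `Γ` form the value group): a map `s : Γ → L` with `μ (s γ) = γ` such that
`s (γ₁γ₂) / (s γ₁ · s γ₂)` is always a square. -/
def IsSemiSection {L : Type*} [Field L] {Γ : Type*} [LinearOrderedCommGroupWithZero Γ]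
    (μ : Valuation L Γ) (s : Γ → L) : Prop :=
  (∀ γ : Γ, γ ≠ 0 → μ (s γ) = γ) ∧
    ∀ γ₁ γ₂ : Γ, γ₁ ≠ 0 → γ₂ ≠ 0 →
      ∃ c : L, c ≠ 0 ∧ s (γ₁ * γ₂) = s γ₁ * s γ₂ * (c * c)

/-- `y ∈ O_μ` and its residue is `>_ℓ 0` for the given ordering of the residue field. -/
def ResPos {L : Type*} [Field L] {Γ : Type*} [LinearOrderedCommGroupWithZero Γ]
    (μ : Valuation L Γ)
    (Oℓ : FieldOrdering (IsLocalRing.ResidueField μ.valuationSubring)) (y : L) : Prop :=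
  ∃ u : μ.valuationSubring, (u : L) = y ∧
    Oℓ.Pos (IsLocalRing.residue (μ.valuationSubring) u)

/-- An ordering `OL` of `L` induces the ordering `Oℓ` of the residue field:
positive units of the valuation ring have positive residue. -/
def OrderingInduces {L : Type*} [Field L] {Γ : Type*} [LinearOrderedCommGroupWithZero Γ]
    (μ : Valuation L Γ) (OL : FieldOrdering L)
    (Oℓ : FieldOrdering (IsLocalRing.ResidueField μ.valuationSubring)) : Prop :=
  ∀ u : μ.valuationSubring, μ (u : L) = 1 → OL.Pos (u : L) →
    Oℓ.Pos (IsLocalRing.residue (μ.valuationSubring) u)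

/-- The set `S_{p̄,ḡ}`: points where all `p_i` are positive and all `g_j` are defined
with value in the valuation ring. -/
def SetSPG {K : Type u} [Field K] [LinearOrder K] [IsStrictOrderedRing K] {Γ₀ : Type v}
    [LinearOrderedCommGroupWithZero Γ₀] (ν : Valuation K Γ₀) {n m l : ℕ}
    (p : Fin m → MvPolynomial (Fin n) K) (g : Fin l → RatFuncField K n) :
    Set (Fin n → K) :=
  {b | (∀ i, 0 < eval b (p i)) ∧ ∀ j, ∃ v : K, HasEvalAt (g j) b v ∧ ν v ≤ 1}


section AuxStmt8

variable {L : Type*} [Field L] {Γ : Type*} [LinearOrderedCommGroupWithZero Γ]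

lemma stmt8_sq_inj {a b : Γ} (h : a * a = b * b) : a = b := by
  rcases lt_trichotomy a b with hlt | he | hgt
  · exact absurd h (ne_of_lt (mul_lt_mul'' hlt hlt zero_le' zero_le'))
  · exact he
  · exact absurd h.symm (ne_of_lt (mul_lt_mul'' hgt hgt zero_le' zero_le'))

namespace FieldOrdering

variable {F : Type*} [Field F] (O : FieldOrdering F)

lemma zero_mem : (0 : F) ∈ O.P := by simpa using O.square_mem 0

lemma one_mem : (1 : F) ∈ O.P := by simpa using O.square_mem 1

lemma not_mem_neg_mem {x : F} (hx : x ∈ O.P) (hx' : -x ∈ O.P) (h0 : x ≠ 0) : False := by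
  have h1 : x * -x * (x⁻¹ * x⁻¹) ∈ O.P :=
    O.mul_mem _ (O.mul_mem _ hx _ hx') _ (O.square_mem x⁻¹)
  have h2 : x * -x * (x⁻¹ * x⁻¹) = -1 := by field_simp
  exact O.neg_one_not_mem (h2 ▸ h1)

lemma pos_add {x y : F} (hx : O.Pos x) (hy : O.Pos y) : O.Pos (x + y) := by
  refine ⟨O.add_mem _ hx.1 _ hy.1, fun h => ?_⟩
  exact O.not_mem_neg_mem hx.1 ((eq_neg_of_add_eq_zero_right h) ▸ hy.1) hx.2

lemma pos_mul {x y : F} (hx : O.Pos x) (hy : O.Pos y) : O.Pos (x * y) :=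
  ⟨O.mul_mem _ hx.1 _ hy.1, mul_ne_zero hx.2 hy.2⟩

lemma pos_sq {x : F} (h : x ≠ 0) : O.Pos (x * x) := ⟨O.square_mem x, mul_ne_zero h h⟩

end FieldOrdering

open scoped Classical in
noncomputable def rres (μ : Valuation L Γ) (x : L) :
    IsLocalRing.ResidueField μ.valuationSubring :=
  if h : μ x ≤ 1 then IsLocalRing.residue _ (⟨x, h⟩ : μ.valuationSubring) else 0

variable (μ : Valuation L Γ)

lemma rres_eq (x : L) (h : μ x ≤ 1) :
    rres μ x = IsLocalRing.residue _ (⟨x, h⟩ : μ.valuationSubring) := dif_pos h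

lemma rres_mul (x y : L) (hx : μ x ≤ 1) (hy : μ y ≤ 1) :
    rres μ (x * y) = rres μ x * rres μ y := by
  have hxy : μ (x * y) ≤ 1 := by rw [map_mul]; exact mul_le_one' hx hy
  rw [rres_eq μ x hx, rres_eq μ y hy, rres_eq μ _ hxy, ← map_mul]
  rfl

lemma rres_add (x y : L) (hx : μ x ≤ 1) (hy : μ y ≤ 1) :
    rres μ (x + y) = rres μ x + rres μ y := by
  have hxy : μ (x + y) ≤ 1 := le_trans (μ.map_add x y) (max_le hx hy)
  rw [rres_eq μ x hx, rres_eq μ y hy, rres_eq μ _ hxy, ← map_add]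
  rfl

lemma rres_neg (x : L) (hx : μ x ≤ 1) : rres μ (-x) = - rres μ x := by
  have hnx : μ (-x) ≤ 1 := by rwa [μ.map_neg]
  rw [rres_eq μ x hx, rres_eq μ _ hnx, ← map_neg]
  rfl

lemma rres_one : rres μ (1 : L) = 1 := by
  rw [rres_eq μ 1 (le_of_eq μ.map_one)]
  exact map_one _

lemma rres_eq_zero_iff (x : L) (h : μ x ≤ 1) : rres μ x = 0 ↔ μ x < 1 := by
  rw [rres_eq μ x h, IsLocalRing.residue_eq_zero_iff, IsLocalRing.mem_maximalIdeal,
    mem_nonunits_iff]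
  constructor
  · intro hnu
    rcases lt_or_eq_of_le h with hlt | heq
    · exact hlt
    · exfalso
      apply hnu
      have hx0 : x ≠ 0 := by
        intro h0
        rw [h0, map_zero] at heq
        exact zero_ne_one heq
      have hxinv : μ x⁻¹ ≤ 1 := by rw [map_inv₀, ← heq, heq, inv_one]
      refine IsUnit.of_mul_eq_one (⟨x⁻¹, hxinv⟩ : μ.valuationSubring) ?_
      ext
      exact mul_inv_cancel₀ hx0
  · intro hlt hu
    obtain ⟨v, hv⟩ := hu
    have hmul : ((v : μ.valuationSubring) : L) *
        (((v⁻¹ : (μ.valuationSubring)ˣ) : μ.valuationSubring) : L) = 1 := by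
      exact congrArg (fun z : μ.valuationSubring => (z : L)) v.mul_inv
    set y : L := (((v⁻¹ : (μ.valuationSubring)ˣ) : μ.valuationSubring) : L) with hy
    have hvx : ((v : μ.valuationSubring) : L) = x := by rw [hv]
    have h1 : μ x * μ y = 1 := by
      rw [← map_mul, ← hvx, hmul, map_one]
    have h2 : μ y ≤ 1 := ((v⁻¹ : (μ.valuationSubring)ˣ) : μ.valuationSubring).2
    have h3 : μ x * μ y < 1 := by
      calc μ x * μ y ≤ μ x * 1 := mul_le_mul_right h2 _
        _ = μ x := mul_one _
        _ < 1 := hlt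
    rw [h1] at h3
    exact lt_irrefl 1 h3

lemma rres_zero_of_lt (x : L) (h : μ x < 1) : rres μ x = 0 :=
  (rres_eq_zero_iff μ x h.le).mpr h

end AuxStmt8

section GoodPart

open scoped symmDiff

variable {L : Type*} [Field L] {Γ : Type*} [LinearOrderedCommGroupWithZero Γ]

lemma stmt8_prod_symmDiff {M : Type*} [CommMonoid M] {ι : Type*} [DecidableEq ι]
    (f : ι → M) (S S' : Finset ι) :
    (∏ i ∈ S, f i) * ∏ i ∈ S', f i =
      (∏ i ∈ S ∆ S', f i) * ((∏ i ∈ S ∩ S', f i) * ∏ i ∈ S ∩ S', f i) := by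
  calc (∏ i ∈ S, f i) * ∏ i ∈ S', f i
      = ((∏ i ∈ S \ S', f i) * ∏ i ∈ S ∩ S', f i) *
        ((∏ i ∈ S' \ S, f i) * ∏ i ∈ S' ∩ S, f i) := by
        rw [← Finset.prod_union (Finset.disjoint_sdiff_inter S S'),
          ← Finset.prod_union (Finset.disjoint_sdiff_inter S' S),
          Finset.sdiff_union_inter, Finset.sdiff_union_inter]
    _ = (∏ i ∈ S ∆ S', f i) * ((∏ i ∈ S ∩ S', f i) * ∏ i ∈ S ∩ S', f i) := by
        rw [symmDiff_def, Finset.sup_eq_union,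
          Finset.prod_union disjoint_sdiff_sdiff, Finset.inter_comm S' S]
        exact mul_mul_mul_comm _ _ _ _

variable (μ : Valuation L Γ)
variable (Oℓ : FieldOrdering (IsLocalRing.ResidueField μ.valuationSubring))
variable {t : ℕ} (p : Fin t → L)

/-- Elements with a "positive leading term" decomposition. -/
def Stmt8Good (x : L) : Prop :=
  x = 0 ∨ ∃ (S : Finset (Fin t)) (d u r : L), d ≠ 0 ∧ μ u = 1 ∧ Oℓ.Pos (rres μ u) ∧
    μ r < μ ((∏ i ∈ S, p i) * (d * d)) ∧ x = (∏ i ∈ S, p i) * (d * d) * u + r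

variable {μ Oℓ p}

lemma stmt8_prod_ne (hp : ∀ i, p i ≠ 0) (S : Finset (Fin t)) : (∏ i ∈ S, p i) ≠ 0 :=
  Finset.prod_ne_zero_iff.mpr fun i _ => hp i

lemma stmt8_good_zero : Stmt8Good μ Oℓ p 0 := Or.inl rfl

lemma stmt8_good_posUnit {u : L} (hu : μ u = 1) (hpos : Oℓ.Pos (rres μ u)) :
    Stmt8Good μ Oℓ p u := by
  refine Or.inr ⟨∅, 1, u, 0, one_ne_zero, hu, hpos, ?_, by simp⟩
  simp only [Finset.prod_empty, one_mul, mul_one, map_zero, map_one]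
  exact zero_lt_one

lemma stmt8_good_one : Stmt8Good μ Oℓ p 1 :=
  stmt8_good_posUnit μ.map_one (by rw [rres_one]; exact ⟨Oℓ.one_mem, one_ne_zero⟩)

lemma stmt8_good_sq {c : L} (hc : c ≠ 0) : Stmt8Good μ Oℓ p (c * c) := by
  refine Or.inr ⟨∅, c, 1, 0, hc, μ.map_one, ?_, ?_, by simp⟩
  · rw [rres_one]; exact ⟨Oℓ.one_mem, one_ne_zero⟩
  · rw [map_zero, zero_lt_iff]
    exact (μ.ne_zero_iff).mpr (by simp [hc])

lemma stmt8_good_p (hp : ∀ i, p i ≠ 0) (i : Fin t) : Stmt8Good μ Oℓ p (p i) := by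
  refine Or.inr ⟨{i}, 1, 1, 0, one_ne_zero, μ.map_one, ?_, ?_, by simp⟩
  · rw [rres_one]; exact ⟨Oℓ.one_mem, one_ne_zero⟩
  · rw [map_zero, zero_lt_iff]
    exact (μ.ne_zero_iff).mpr (by simp [hp i])

lemma stmt8_val_indep (hp : ∀ i, p i ≠ 0)
    (hindep : ∀ S : Finset (Fin t), (∃ δ : Γ, (∏ i ∈ S, μ (p i)) = δ * δ) → S = ∅)
    {S S' : Finset (Fin t)} {a b : Γ} (ha : a ≠ 0) (hb : b ≠ 0)
    (h : (∏ i ∈ S, μ (p i)) * (a * a) = (∏ i ∈ S', μ (p i)) * (b * b)) :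
    S = S' ∧ a = b := by
  have hPne : ∀ T : Finset (Fin t), (∏ i ∈ T, μ (p i)) ≠ 0 := fun T =>
    Finset.prod_ne_zero_iff.mpr fun i _ => (μ.ne_zero_iff).mpr (hp i)
  have key := stmt8_prod_symmDiff (fun i => μ (p i)) S S'
  set A := ∏ i ∈ S, μ (p i) with hA
  set B := ∏ i ∈ S', μ (p i) with hB
  set C := ∏ i ∈ S ∩ S', μ (p i) with hC
  have hCa : C * a ≠ 0 := mul_ne_zero (hPne _) ha
  have e1 : (∏ i ∈ S ∆ S', μ (p i)) * ((C * a) * (C * a)) = (B * b) * (B * b) := by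
    calc (∏ i ∈ S ∆ S', μ (p i)) * ((C * a) * (C * a))
        = ((∏ i ∈ S ∆ S', μ (p i)) * (C * C)) * (a * a) := by
          rw [mul_mul_mul_comm C a C a, ← mul_assoc]
      _ = (A * B) * (a * a) := by rw [← key]
      _ = (A * (a * a)) * B := by rw [mul_assoc, mul_comm B, ← mul_assoc]
      _ = (B * (b * b)) * B := by rw [h]
      _ = (B * b) * (B * b) := by rw [mul_mul_mul_comm B b B b, ← mul_assoc, mul_assoc B b b,
            mul_comm (B * (b*b)) B, ← mul_assoc]
  have e2 : (∏ i ∈ S ∆ S', μ (p i)) = ((B * b) / (C * a)) * ((B * b) / (C * a)) := by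
    rw [div_mul_div_comm, eq_div_iff (mul_ne_zero hCa hCa)]
    exact e1
  have hSS : S = S' := by
    have h0 := hindep (S ∆ S') ⟨(B * b) / (C * a), e2⟩
    have : S ∆ S' = (⊥ : Finset (Fin t)) := h0
    exact symmDiff_eq_bot.mp this
  subst hSS
  rw [hA] at h
  rw [hB] at h
  exact ⟨rfl, stmt8_sq_inj (mul_left_cancel₀ (hPne S) h)⟩

lemma stmt8_good_val {S : Finset (Fin t)} {d u r x : L} (hu : μ u = 1)
    (hr : μ r < μ ((∏ i ∈ S, p i) * (d * d)))
    (hx : x = (∏ i ∈ S, p i) * (d * d) * u + r) :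
    μ x = μ ((∏ i ∈ S, p i) * (d * d)) := by
  have hAu : μ ((∏ i ∈ S, p i) * (d * d) * u) = μ ((∏ i ∈ S, p i) * (d * d)) := by
    rw [map_mul, hu, mul_one]
  rw [hx, Valuation.map_add_eq_of_lt_left μ (by rw [hAu]; exact hr), hAu]

lemma stmt8_good_mul (hp : ∀ i, p i ≠ 0) {x y : L}
    (hx : Stmt8Good μ Oℓ p x) (hy : Stmt8Good μ Oℓ p y) : Stmt8Good μ Oℓ p (x * y) := by
  rcases hx with rfl | ⟨S, d, u, r, hd, hu, hupos, hr, hxe⟩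
  · left; simp
  rcases hy with rfl | ⟨S', e, v, s, he, hv, hvpos, hs, hye⟩
  · left; simp
  right
  set A := (∏ i ∈ S, p i) * (d * d) with hA
  set B := (∏ i ∈ S', p i) * (e * e) with hB
  have hA0 : A ≠ 0 := mul_ne_zero (stmt8_prod_ne hp S) (mul_ne_zero hd hd)
  have hB0 : B ≠ 0 := mul_ne_zero (stmt8_prod_ne hp S') (mul_ne_zero he he)
  have hμA : μ A ≠ 0 := (μ.ne_zero_iff).mpr hA0
  have hμB : μ B ≠ 0 := (μ.ne_zero_iff).mpr hB0
  set d'' := d * e * ∏ i ∈ S ∩ S', p i with hd''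
  set C := (∏ i ∈ S ∆ S', p i) * (d'' * d'') with hCdef
  have hCAB : C = A * B := by
    rw [hCdef, hd'', hA, hB]
    have hps := stmt8_prod_symmDiff p S S'
    calc (∏ i ∈ S ∆ S', p i) * ((d * e * ∏ i ∈ S ∩ S', p i) * (d * e * ∏ i ∈ S ∩ S', p i))
        = ((∏ i ∈ S ∆ S', p i) * ((∏ i ∈ S ∩ S', p i) * ∏ i ∈ S ∩ S', p i)) *
            ((d * d) * (e * e)) := by ring
      _ = ((∏ i ∈ S, p i) * ∏ i ∈ S', p i) * ((d * d) * (e * e)) := by rw [← hps]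
      _ = (∏ i ∈ S, p i) * (d * d) * ((∏ i ∈ S', p i) * (e * e)) := by ring
  refine ⟨S ∆ S', d'', u * v, x * s + r * (B * v), ?_, ?_, ?_, ?_, ?_⟩
  · exact mul_ne_zero (mul_ne_zero hd he) (stmt8_prod_ne hp _)
  · rw [map_mul, hu, hv, mul_one]
  · rw [rres_mul μ u v hu.le hv.le]
    exact Oℓ.pos_mul hupos hvpos
  · rw [← hCdef, hCAB, map_mul]
    have hμx : μ x = μ A := stmt8_good_val hu hr hxe
    have h1 : μ (x * s) < μ A * μ B := by
      rw [map_mul, hμx]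
      exact mul_lt_mul_of_le_of_lt_of_pos_of_nonneg (le_refl (μ A)) hs (zero_lt_iff.mpr hμA) zero_le'
    have h2 : μ (r * (B * v)) < μ A * μ B := by
      rw [map_mul, map_mul, hv, mul_one, mul_comm (μ r) (μ B), mul_comm (μ A) (μ B)]
      exact mul_lt_mul_of_le_of_lt_of_pos_of_nonneg (le_refl (μ B)) hr (zero_lt_iff.mpr hμB) zero_le'
    exact lt_of_le_of_lt (μ.map_add _ _) (max_lt h1 h2)
  · rw [← hCdef, hCAB, hxe, hye]
    ring

lemma stmt8_good_add (hp : ∀ i, p i ≠ 0)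
    (hindep : ∀ S : Finset (Fin t), (∃ δ : Γ, (∏ i ∈ S, μ (p i)) = δ * δ) → S = ∅)
    {x y : L} (hx : Stmt8Good μ Oℓ p x) (hy : Stmt8Good μ Oℓ p y) :
    Stmt8Good μ Oℓ p (x + y) := by
  rcases hx with rfl | ⟨S, d, u, r, hd, hu, hupos, hr, hxe⟩
  · simpa using hy
  rcases hy with rfl | ⟨S', e, v, s, he, hv, hvpos, hs, hye⟩
  · rw [add_zero]; exact Or.inr ⟨S, d, u, r, hd, hu, hupos, hr, hxe⟩
  set A := (∏ i ∈ S, p i) * (d * d) with hA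
  set B := (∏ i ∈ S', p i) * (e * e) with hB
  have hA0 : A ≠ 0 := mul_ne_zero (stmt8_prod_ne hp S) (mul_ne_zero hd hd)
  have hB0 : B ≠ 0 := mul_ne_zero (stmt8_prod_ne hp S') (mul_ne_zero he he)
  have hμx : μ x = μ A := stmt8_good_val hu hr hxe
  have hμy : μ y = μ B := stmt8_good_val hv hs hye
  rcases lt_trichotomy (μ A) (μ B) with hlt | heq | hgt
  · refine Or.inr ⟨S', e, v, x + s, he, hv, hvpos, ?_, ?_⟩
    · rw [← hB]
      exact lt_of_le_of_lt (μ.map_add _ _) (max_lt (hμx ▸ hlt) hs)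
    · rw [hye]; ring
  · -- equal leading values
    have hdv : μ d ≠ 0 := (μ.ne_zero_iff).mpr hd
    have hev : μ e ≠ 0 := (μ.ne_zero_iff).mpr he
    have hμAB : (∏ i ∈ S, μ (p i)) * (μ d * μ d) = (∏ i ∈ S', μ (p i)) * (μ e * μ e) := by
      have h1 : μ A = (∏ i ∈ S, μ (p i)) * (μ d * μ d) := by
        rw [hA, map_mul, map_mul, map_prod]
      have h2 : μ B = (∏ i ∈ S', μ (p i)) * (μ e * μ e) := by
        rw [hB, map_mul, map_mul, map_prod]
      rw [← h1, ← h2, heq]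
    obtain ⟨hSS, hde⟩ := stmt8_val_indep hp hindep hdv hev hμAB
    subst hSS
    have hBA : B = A * ((e * d⁻¹) * (e * d⁻¹)) := by
      rw [hA, hB]
      field_simp
    have hed : μ (e * d⁻¹) = 1 := by
      rw [map_mul, map_inv₀, ← hde]
      exact mul_inv_cancel₀ hdv
    have hedres : rres μ (e * d⁻¹) ≠ 0 := fun h0 =>
      absurd ((rres_eq_zero_iff μ _ hed.le).mp h0) (by rw [hed]; exact lt_irrefl 1)
    set q := (e * d⁻¹) * (e * d⁻¹) with hq
    have hq1 : μ q = 1 := by rw [hq, map_mul, hed, mul_one]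
    have hqpos : Oℓ.Pos (rres μ q) := by
      rw [hq, rres_mul μ _ _ hed.le hed.le]
      exact Oℓ.pos_sq hedres
    have hμqv : μ (q * v) = 1 := by rw [map_mul, hq1, hv, mul_one]
    set w := u + q * v with hw
    have hwle : μ w ≤ 1 := le_trans (μ.map_add _ _) (max_le hu.le hμqv.le)
    have hwres : Oℓ.Pos (rres μ w) := by
      rw [hw, rres_add μ _ _ hu.le hμqv.le, rres_mul μ _ _ hq1.le hv.le]
      exact Oℓ.pos_add hupos (Oℓ.pos_mul hqpos hvpos)
    have hw1 : μ w = 1 := by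
      rcases lt_or_eq_of_le hwle with hlt2 | heq2
      · exact absurd (rres_zero_of_lt μ w hlt2) hwres.2
      · exact heq2
    refine Or.inr ⟨S, d, w, r + s, hd, hw1, hwres, ?_, ?_⟩
    · rw [← hA]
      exact lt_of_le_of_lt (μ.map_add _ _) (max_lt hr (heq ▸ hs))
    · rw [hxe, hye, hBA, hw, ← hA]
      ring
  · refine Or.inr ⟨S, d, u, y + r, hd, hu, hupos, ?_, ?_⟩
    · rw [← hA]
      exact lt_of_le_of_lt (μ.map_add _ _) (max_lt (hμy ▸ hgt) hr)
    · rw [hxe]; ring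

lemma stmt8_not_good_neg_one (hp : ∀ i, p i ≠ 0)
    (hindep : ∀ S : Finset (Fin t), (∃ δ : Γ, (∏ i ∈ S, μ (p i)) = δ * δ) → S = ∅) :
    ¬ Stmt8Good μ Oℓ p (-1) := by
  rintro (h0 | ⟨S, d, u, r, hd, hu, hupos, hr, he⟩)
  · norm_num at h0
  set A := (∏ i ∈ S, p i) * (d * d) with hA
  have hdv : μ d ≠ 0 := (μ.ne_zero_iff).mpr hd
  have hμA : μ A = 1 := by
    have := stmt8_good_val hu hr he
    rw [← hA] at this
    rw [← this]
    simp
  have hexp : (∏ i ∈ S, μ (p i)) * (μ d * μ d) = (∏ i ∈ (∅ : Finset (Fin t)), μ (p i)) *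
      ((1 : Γ) * 1) := by
    have h1 : μ A = (∏ i ∈ S, μ (p i)) * (μ d * μ d) := by
      rw [hA, map_mul, map_mul, map_prod]
    rw [← h1, hμA]
    simp
  obtain ⟨hSe, hd1⟩ := stmt8_val_indep hp hindep hdv one_ne_zero hexp
  subst hSe
  have hAd : A = d * d := by rw [hA]; simp
  have hrlt : μ r < 1 := by rw [← hμA]; exact hr
  have hdd : d * d ≠ 0 := mul_ne_zero hd hd
  have hu' : u = (-1 + -r) * (d⁻¹ * d⁻¹) := by
    rw [hAd] at he
    have h9 : u * (d * d) = -1 + -r := by linear_combination -he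
    have h10 : u = u * (d * d) * (d⁻¹ * d⁻¹) := by field_simp
    rw [h10, h9]
  have hdinv : μ d⁻¹ = 1 := by rw [map_inv₀, hd1, inv_one]
  have hm1 : μ (-1 : L) ≤ 1 := by rw [μ.map_neg, μ.map_one]
  have hmr : μ (-r : L) ≤ 1 := by rw [μ.map_neg]; exact hrlt.le
  have hm1r : μ (-1 + -r : L) ≤ 1 := le_trans (μ.map_add _ _) (max_le hm1 hmr)
  have hres : rres μ u = (-1) * (rres μ d⁻¹ * rres μ d⁻¹) := by
    rw [hu', rres_mul μ _ _ hm1r (by rw [map_mul, hdinv, mul_one])]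
    have h2 : rres μ (-1 + -r : L) = -1 := by
      rw [rres_add μ _ _ hm1 hmr,
        rres_neg μ 1 (le_of_eq μ.map_one), rres_one,
        rres_zero_of_lt μ (-r) (by rw [μ.map_neg]; exact hrlt)]
      ring
    rw [h2, rres_mul μ _ _ hdinv.le hdinv.le]
  have hc : rres μ d⁻¹ ≠ 0 := fun h0 =>
    absurd ((rres_eq_zero_iff μ _ hdinv.le).mp h0) (by rw [hdinv]; exact lt_irrefl 1)
  have hposneg : Oℓ.Pos (-(rres μ d⁻¹ * rres μ d⁻¹)) := by
    rw [← neg_one_mul, ← hres]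
    exact hupos
  exact Oℓ.not_mem_neg_mem (Oℓ.square_mem _) hposneg.1 (mul_ne_zero hc hc)

end GoodPart

/-- If `p₁,…,p_t ∈ L×` have values independent modulo `2Γ_L`, then any
ordering of the residue field is induced by an ordering of `L` making all `p_i` nonnegative. -/
theorem exists_ordering_inducing_with_pos {L : Type u} [Field L] {Γ : Type v}
    [LinearOrderedCommGroupWithZero Γ] (μ : Valuation L Γ)
    (hsurj : ∀ γ : Γ, γ ≠ 0 → ∃ x : L, μ x = γ)
    (Oℓ : FieldOrdering (IsLocalRing.ResidueField μ.valuationSubring))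
    {t : ℕ} (p : Fin t → L) (hp : ∀ i, p i ≠ 0)
    (hindep : ∀ S : Finset (Fin t), (∃ δ : Γ, (∏ i ∈ S, μ (p i)) = δ * δ) → S = ∅) :
    ∃ OL : FieldOrdering L, OrderingInduces μ OL Oℓ ∧ ∀ i, p i ∈ OL.P := by
  classical
  set G : Set L := {x | Stmt8Good μ Oℓ p x} with hG
  set 𝒞 : Set (Set L) := {P | G ⊆ P ∧ (∀ x ∈ P, ∀ y ∈ P, x + y ∈ P) ∧
    (∀ x ∈ P, ∀ y ∈ P, x * y ∈ P) ∧ (-1 : L) ∉ P} with h𝒞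
  have hGC : G ∈ 𝒞 := by
    refine ⟨subset_rfl, ?_, ?_, ?_⟩
    · exact fun x hx y hy => stmt8_good_add hp hindep hx hy
    · exact fun x hx y hy => stmt8_good_mul hp hx hy
    · exact stmt8_not_good_neg_one hp hindep
  obtain ⟨M, hGM, hMmax⟩ : ∃ M, G ⊆ M ∧ Maximal (· ∈ 𝒞) M := by
    refine zorn_subset_nonempty 𝒞 ?_ G hGC
    intro c hc hchain hne
    obtain ⟨P0, hP0⟩ := hne
    refine ⟨⋃₀ c, ⟨subset_trans (hc hP0).1 (Set.subset_sUnion_of_mem hP0), ?_, ?_, ?_⟩,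
      fun s hs => Set.subset_sUnion_of_mem hs⟩
    · rintro x ⟨P1, hP1, hx1⟩ y ⟨P2, hP2, hy2⟩
      rcases hchain.total hP1 hP2 with h12 | h21
      · exact ⟨P2, hP2, (hc hP2).2.1 x (h12 hx1) y hy2⟩
      · exact ⟨P1, hP1, (hc hP1).2.1 x hx1 y (h21 hy2)⟩
    · rintro x ⟨P1, hP1, hx1⟩ y ⟨P2, hP2, hy2⟩
      rcases hchain.total hP1 hP2 with h12 | h21
      · exact ⟨P2, hP2, (hc hP2).2.2.1 x (h12 hx1) y hy2⟩
      · exact ⟨P1, hP1, (hc hP1).2.2.1 x hx1 y (h21 hy2)⟩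
    · rintro ⟨P1, hP1, hx1⟩
      exact (hc hP1).2.2.2 hx1
  have hMC : M ∈ 𝒞 := hMmax.prop
  obtain ⟨hGsub, addM, mulM, negoneM⟩ := hMC
  have zeroM : (0 : L) ∈ M := hGsub stmt8_good_zero
  have oneM : (1 : L) ∈ M := hGsub stmt8_good_one
  have sqM : ∀ c : L, c ≠ 0 → c * c ∈ M := fun c hc => hGsub (stmt8_good_sq hc)
  have hnotboth : ∀ x : L, x ≠ 0 → x ∈ M → -x ∈ M → False := by
    intro x hx h1 h2
    have hmem : x * -x * (x⁻¹ * x⁻¹) ∈ M :=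
      mulM _ (mulM _ h1 _ h2) _ (sqM _ (inv_ne_zero hx))
    have he : x * -x * (x⁻¹ * x⁻¹) = -1 := by field_simp
    exact negoneM (he ▸ hmem)
  have htotal : ∀ x : L, x ∈ M ∨ -x ∈ M := by
    intro x
    by_cases hx0 : x = 0
    · left; rw [hx0]; exact zeroM
    by_contra hcon
    push_neg at hcon
    obtain ⟨hxM, hnxM⟩ := hcon
    have hext : ∀ z : L, z ≠ 0 → z ∉ M → ∃ a ∈ M, ∃ b ∈ M, (-1 : L) = a + z * b := by
      intro z hz0 hz
      set M' : Set L := {w | ∃ a ∈ M, ∃ b ∈ M, w = a + z * b} with hM'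
      have hMM' : M ⊆ M' := fun m hm => ⟨m, hm, 0, zeroM, by ring⟩
      by_contra hno
      push_neg at hno
      have hM'C : M' ∈ 𝒞 := by
        refine ⟨subset_trans hGsub hMM', ?_, ?_, ?_⟩
        · rintro _ ⟨a1, ha1, b1, hb1, rfl⟩ _ ⟨a2, ha2, b2, hb2, rfl⟩
          exact ⟨a1 + a2, addM _ ha1 _ ha2, b1 + b2, addM _ hb1 _ hb2, by ring⟩
        · rintro _ ⟨a1, ha1, b1, hb1, rfl⟩ _ ⟨a2, ha2, b2, hb2, rfl⟩
          refine ⟨a1 * a2 + (z * z) * (b1 * b2),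
            addM _ (mulM _ ha1 _ ha2) _ (mulM _ (sqM z hz0) _ (mulM _ hb1 _ hb2)),
            a1 * b2 + b1 * a2, addM _ (mulM _ ha1 _ hb2) _ (mulM _ hb1 _ ha2), by ring⟩
        · rintro ⟨a, ha, b, hb, he⟩
          exact hno a ha b hb he
      have hsub : M' ⊆ M := hMmax.2 hM'C hMM'
      exact hz (hsub ⟨0, zeroM, 1, oneM, by ring⟩)
    obtain ⟨a, ha, b, hb, hab⟩ := hext x hx0 hxM
    obtain ⟨c, hc, d, hd, hcd⟩ := hext (-x) (neg_ne_zero.mpr hx0) hnxM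
    have hb0 : b ≠ 0 := by
      rintro rfl
      have : (-1 : L) = a := by rw [hab]; ring
      exact negoneM (this ▸ ha)
    have hd0 : d ≠ 0 := by
      rintro rfl
      have : (-1 : L) = c := by rw [hcd]; ring
      exact negoneM (this ▸ hc)
    have hxbd : x * b * d ≠ 0 := mul_ne_zero (mul_ne_zero hx0 hb0) hd0
    have key : (-1 : L) = (1 + a) * (1 + c) * (b * d) * ((x * b * d)⁻¹ * (x * b * d)⁻¹) := by
      have h1 : (1 + a : L) = -(x * b) := by linear_combination -hab
      have h2 : (1 + c : L) = x * d := by linear_combination -hcd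
      rw [h1, h2]
      field_simp
    have hmem : (-1 : L) ∈ M := by
      rw [key]
      exact mulM _ (mulM _ (mulM _ (addM _ oneM _ ha) _ (addM _ oneM _ hc)) _
        (mulM _ hb _ hd)) _ (sqM _ (inv_ne_zero hxbd))
    exact negoneM hmem
  refine ⟨⟨M, addM, mulM, ?_, negoneM, htotal⟩, ?_, fun i => hGsub (stmt8_good_p hp i)⟩
  · intro x
    by_cases hx0 : x = 0
    · rw [hx0, mul_zero]; exact zeroM
    · exact sqM x hx0
  · intro u hu1 hupos
    have hres : IsLocalRing.residue _ u = rres μ (u : L) := by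
      rw [rres_eq μ (u : L) u.2]
    have hne : rres μ (u : L) ≠ 0 := fun h0 =>
      absurd ((rres_eq_zero_iff μ _ u.2).mp h0) (by rw [hu1]; exact lt_irrefl 1)
    rcases Oℓ.total (rres μ (u : L)) with hmem | hneg
    · rw [hres]
      exact ⟨hmem, hne⟩
    · exfalso
      have hnegres : Oℓ.Pos (rres μ (-(u : L))) := by
        rw [rres_neg μ (u : L) u.2]
        exact ⟨hneg, neg_ne_zero.mpr hne⟩
      have hgood : Stmt8Good μ Oℓ p (-(u : L)) :=
        stmt8_good_posUnit (by rw [μ.map_neg]; exact hu1) hnegres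
      exact hnotboth (u : L) hupos.2 hupos.1 (hGsub hgood)
end

section
/- Let (K,ν) be a real closed valued field, L = K(x₁,…,xₙ), p₁,…,p_m ∈ K[x₁,…,xₙ] with S_p̄ nonempty, and let A_p̄ be the O_ν-subalgebra of L generated by I_p̄ = {1/(1+f) : f ∈ Cone({p₁,…,p_m})}. Let ν̃ be any valuation on L extending ν such that A_p̄ ⊆ O_ν̃. Then there exists a linear order ≤_L on L which is compatible with ν̃ and satisfies p_i ≥_L 0 for every 1 ≤ i ≤ m. -/
set_option maxHeartbeats 1000000
set_option synthInstance.maxHeartbeats 400000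

universe u v w

open MvPolynomial

open MvPolynomial

namespace S9

variable {K : Type*} [Field K] [LinearOrder K] [IsStrictOrderedRing K] {n : ℕ}

/-- The lex-minimal exponent of a nonzero polynomial (junk value `0` at `0`). -/
noncomputable def lmin (u : MvPolynomial (Fin n) K) : Lex (Fin n →₀ ℕ) :=
  if h : u = 0 then 0
  else (u.support.image toLex).min' (by
    rw [Finset.image_nonempty, Finset.nonempty_iff_ne_empty, Ne, MvPolynomial.support_eq_empty]
    exact h)

/-- The coefficient of the lex-minimal exponent. -/
noncomputable def lcf (u : MvPolynomial (Fin n) K) : K :=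
  MvPolynomial.coeff (ofLex (lmin u)) u

theorem lmin_mem {u : MvPolynomial (Fin n) K} (hu : u ≠ 0) : ofLex (lmin u) ∈ u.support := by
  rw [lmin, dif_neg hu]
  have := Finset.min'_mem (u.support.image toLex) (by
    rw [Finset.image_nonempty, Finset.nonempty_iff_ne_empty, Ne, MvPolynomial.support_eq_empty]
    exact hu)
  obtain ⟨a, ha, hae⟩ := Finset.mem_image.mp this
  rw [← hae]; exact ha

theorem lmin_le {u : MvPolynomial (Fin n) K} (hu : u ≠ 0) {a : Fin n →₀ ℕ} (ha : a ∈ u.support) :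
    lmin u ≤ toLex a := by
  rw [lmin, dif_neg hu]
  exact Finset.min'_le _ _ (Finset.mem_image_of_mem _ ha)

theorem lcf_ne_zero {u : MvPolynomial (Fin n) K} (hu : u ≠ 0) : lcf u ≠ 0 := by
  have := lmin_mem hu
  rwa [MvPolynomial.mem_support_iff] at this

theorem lmin_eq {u : MvPolynomial (Fin n) K} (hu : u ≠ 0) {c : Lex (Fin n →₀ ℕ)}
    (hc : ofLex c ∈ u.support) (hle : ∀ a ∈ u.support, c ≤ toLex a) : lmin u = c :=
  le_antisymm (lmin_le hu hc) (hle _ (lmin_mem hu))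

variable {K : Type*} [Field K] [LinearOrder K] [IsStrictOrderedRing K] {n : ℕ}

theorem lmin_mem' {u : MvPolynomial (Fin n) K} (hu : u ≠ 0) : ofLex (lmin u) ∈ u.support := lmin_mem hu

theorem coeff_lmin_mul {u v : MvPolynomial (Fin n) K} (hu : u ≠ 0) (hv : v ≠ 0) :
    MvPolynomial.coeff (ofLex (lmin u + lmin v)) (u * v) = lcf u * lcf v := by
  classical
  rw [MvPolynomial.coeff_mul]
  have hmem : (ofLex (lmin u), ofLex (lmin v)) ∈
      Finset.HasAntidiagonal.antidiagonal (ofLex (lmin u + lmin v)) := by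
    rw [Finset.HasAntidiagonal.mem_antidiagonal]; rfl
  rw [Finset.sum_eq_single (ofLex (lmin u), ofLex (lmin v))]
  · rfl
  · rintro ⟨a, c⟩ hac hne
    by_contra hz
    have ha : a ∈ u.support := by
      rw [MvPolynomial.mem_support_iff]; intro h; apply hz; rw [h, zero_mul]
    have hc : c ∈ v.support := by
      rw [MvPolynomial.mem_support_iff]; intro h; apply hz; rw [h, mul_zero]
    have hau := lmin_le hu ha
    have hcv := lmin_le hv hc
    rw [Finset.HasAntidiagonal.mem_antidiagonal] at hac
    have hsum : toLex a + toLex c = lmin u + lmin v := by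
      rw [← toLex_add, hac]; rfl
    have h1 : toLex a = lmin u := by
      rcases eq_or_lt_of_le hau with h | h
      · exact h.symm
      · exfalso
        have : lmin u + lmin v < toLex a + toLex c := add_lt_add_of_lt_of_le h hcv
        rw [hsum] at this; exact lt_irrefl _ this
    have h2 : toLex c = lmin v := by
      have := hsum
      rw [h1] at this
      exact add_left_cancel this
    exact hne (by rw [← h1, ← h2]; rfl)
  · intro h; exact absurd hmem h

theorem lmin_mul {u v : MvPolynomial (Fin n) K} (hu : u ≠ 0) (hv : v ≠ 0) :
    lmin (u * v) = lmin u + lmin v := by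
  classical
  apply lmin_eq (mul_ne_zero hu hv)
  · rw [MvPolynomial.mem_support_iff, coeff_lmin_mul hu hv]
    exact mul_ne_zero (lcf_ne_zero hu) (lcf_ne_zero hv)
  · intro a ha
    rw [MvPolynomial.mem_support_iff, MvPolynomial.coeff_mul] at ha
    obtain ⟨⟨x, y⟩, hxy, hne⟩ := Finset.exists_ne_zero_of_sum_ne_zero ha
    rw [Finset.HasAntidiagonal.mem_antidiagonal] at hxy
    have hx : x ∈ u.support := by
      rw [MvPolynomial.mem_support_iff]; intro h; apply hne; rw [h, zero_mul]
    have hy : y ∈ v.support := by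
      rw [MvPolynomial.mem_support_iff]; intro h; apply hne; rw [h, mul_zero]
    calc lmin u + lmin v ≤ toLex x + toLex y :=
          add_le_add (lmin_le hu hx) (lmin_le hv hy)
      _ = toLex a := by rw [← toLex_add, hxy]

theorem lcf_mul {u v : MvPolynomial (Fin n) K} (hu : u ≠ 0) (hv : v ≠ 0) :
    lcf (u * v) = lcf u * lcf v := by
  rw [lcf, lmin_mul hu hv, coeff_lmin_mul hu hv]

variable {K : Type*} [Field K] [LinearOrder K] [IsStrictOrderedRing K] {n : ℕ}

/-- Positivity of the lex-lowest coefficient. -/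
def PP (u : MvPolynomial (Fin n) K) : Prop := u ≠ 0 ∧ 0 < lcf u

theorem PP_mul {u v : MvPolynomial (Fin n) K} (hu : PP u) (hv : PP v) : PP (u * v) :=
  ⟨mul_ne_zero hu.1 hv.1, by rw [lcf_mul hu.1 hv.1]; exact mul_pos hu.2 hv.2⟩

theorem PP_sq {u : MvPolynomial (Fin n) K} (hu : u ≠ 0) : PP (u * u) :=
  ⟨mul_ne_zero hu hu, by
    rw [lcf_mul hu hu]
    exact mul_self_pos.mpr (lcf_ne_zero hu)⟩

theorem PP_add_aux {u v : MvPolynomial (Fin n) K} (hu : PP u) (hv : PP v)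
    (h : lmin u ≤ lmin v) : PP (u + v) ∧ lmin (u + v) = lmin u := by
  have hc : 0 < MvPolynomial.coeff (ofLex (lmin u)) u + MvPolynomial.coeff (ofLex (lmin u)) v := by
    rcases eq_or_lt_of_le h with he | hlt
    · have : MvPolynomial.coeff (ofLex (lmin u)) v = lcf v := by rw [lcf, ← he]
      rw [this]; exact add_pos hu.2 hv.2
    · have : MvPolynomial.coeff (ofLex (lmin u)) v = 0 := by
        by_contra hz
        have := lmin_le hv.1 (MvPolynomial.mem_support_iff.mpr hz)
        exact absurd (lt_of_le_of_lt this hlt) (lt_irrefl _)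
      rw [this, add_zero]; exact hu.2
  have hco : MvPolynomial.coeff (ofLex (lmin u)) (u + v) ≠ 0 := by
    rw [MvPolynomial.coeff_add]; exact ne_of_gt hc
  have hne : u + v ≠ 0 := fun h0 => hco (by rw [h0, MvPolynomial.coeff_zero])
  have hl : lmin (u + v) = lmin u := by
    apply lmin_eq hne (MvPolynomial.mem_support_iff.mpr hco)
    intro a ha
    have := MvPolynomial.support_add ha
    rw [Finset.mem_union] at this
    rcases this with h1 | h1
    · exact lmin_le hu.1 h1
    · exact le_trans h (lmin_le hv.1 h1)
  refine ⟨⟨hne, ?_⟩, hl⟩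
  rw [lcf, hl, MvPolynomial.coeff_add]; exact hc

theorem PP_add {u v : MvPolynomial (Fin n) K} (hu : PP u) (hv : PP v) : PP (u + v) := by
  rcases le_total (lmin u) (lmin v) with h | h
  · exact (PP_add_aux hu hv h).1
  · rw [add_comm]; exact (PP_add_aux hv hu h).1

theorem lmin_neg {u : MvPolynomial (Fin n) K} : lmin (-u) = lmin u := by
  rcases eq_or_ne u 0 with rfl | hu
  · rw [neg_zero]
  · apply lmin_eq (neg_ne_zero.mpr hu)
    · rw [MvPolynomial.support_neg]; exact lmin_mem hu
    · intro a ha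
      rw [MvPolynomial.support_neg] at ha
      exact lmin_le hu ha

theorem lcf_neg {u : MvPolynomial (Fin n) K} : lcf (-u) = -lcf u := by
  rw [lcf, lcf, lmin_neg, MvPolynomial.coeff_neg]

theorem not_PP_neg_sq {u : MvPolynomial (Fin n) K} (hu : u ≠ 0) : ¬ PP (-(u * u)) := by
  rintro ⟨-, hpos⟩
  rw [lcf_neg, lcf_mul hu hu] at hpos
  have := mul_self_nonneg (lcf u)
  linarith

/-- If the constant coefficient is nonzero then it is the lex-lowest coefficient. -/
theorem lcf_of_constantCoeff_ne_zero {u : MvPolynomial (Fin n) K}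
    (h : MvPolynomial.coeff 0 u ≠ 0) : lcf u = MvPolynomial.coeff 0 u := by
  have hu : u ≠ 0 := fun h0 => h (by rw [h0, MvPolynomial.coeff_zero])
  have : lmin u = toLex 0 := by
    apply lmin_eq hu
    · exact MvPolynomial.mem_support_iff.mpr h
    · intro a _
      exact bot_le (α := Lex (Fin n →₀ ℕ))
  rw [lcf, this]; rfl

end S9

namespace S9

variable {K : Type u} [Field K] [LinearOrder K] [IsStrictOrderedRing K] {n : ℕ}

/-- Shift of coordinates by `b`. -/
noncomputable def shiftMap (b : Fin n → K) :
    MvPolynomial (Fin n) K →ₐ[K] MvPolynomial (Fin n) K :=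
  aeval (fun i => X i + C (b i))

theorem shiftMap_shiftMap_neg (b : Fin n → K) (u : MvPolynomial (Fin n) K) :
    aeval (fun i => X i - C (b i)) (shiftMap b u) = u := by
  rw [shiftMap, MvPolynomial.comp_aeval_apply]
  have : (aeval fun i => (aeval fun i => X i - C (b i)) (X i + C (b i))) =
      aeval (R := K) (X : Fin n → MvPolynomial (Fin n) K) := by
    congr 1
    funext i
    simp
  rw [this, aeval_X_left_apply]

theorem shiftMap_ne_zero {b : Fin n → K} {u : MvPolynomial (Fin n) K} (hu : u ≠ 0) :
    shiftMap b u ≠ 0 := by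
  intro h
  apply hu
  rw [← shiftMap_shiftMap_neg b u, h, map_zero]

theorem coeff_zero_shiftMap (b : Fin n → K) (u : MvPolynomial (Fin n) K) :
    MvPolynomial.coeff 0 (shiftMap b u) = eval b u := by
  have h1 : MvPolynomial.coeff 0 (shiftMap b u) = aeval (0 : Fin n → K) (shiftMap b u) := by
    have : aeval (0 : Fin n → K) (shiftMap b u) = eval (0 : Fin n → K) (shiftMap b u) := by
      rw [← coe_aeval_eq_eval]; rfl
    rw [this, eval_zero]; rfl
  rw [h1, shiftMap, MvPolynomial.comp_aeval_apply]
  have h2 : (aeval fun i => (aeval (0 : Fin n → K)) (X i + C (b i))) = aeval (R := K) b := by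
    congr 1
    funext i
    simp
  rw [h2, ← coe_aeval_eq_eval]
  rfl

end S9

namespace S9

variable {K : Type u} [Field K] [LinearOrder K] [IsStrictOrderedRing K] {n : ℕ}

/-- Positivity on the rational function field w.r.t. lexicographic infinitesimal
displacement from `b`. -/
def PosL (b : Fin n → K) (x : RatFuncField K n) : Prop :=
  ∃ q r : MvPolynomial (Fin n) K, r ≠ 0 ∧
    x = algebraMap (MvPolynomial (Fin n) K) (RatFuncField K n) q /
      algebraMap (MvPolynomial (Fin n) K) (RatFuncField K n) r ∧
    PP (shiftMap b (q * r))

theorem algMap_ne_zero {r : MvPolynomial (Fin n) K} (hr : r ≠ 0) :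
    algebraMap (MvPolynomial (Fin n) K) (RatFuncField K n) r ≠ 0 := fun h =>
  hr (IsFractionRing.to_map_eq_zero_iff.mp h)

theorem posL_mul {b : Fin n → K} {x y : RatFuncField K n} (hx : PosL b x) (hy : PosL b y) :
    PosL b (x * y) := by
  obtain ⟨q, r, hr, hxe, hq⟩ := hx
  obtain ⟨q', r', hr', hye, hq'⟩ := hy
  refine ⟨q * q', r * r', mul_ne_zero hr hr', ?_, ?_⟩
  · rw [hxe, hye, map_mul, map_mul]
    ring
  · have : q * q' * (r * r') = (q * r) * (q' * r') := by ring
    rw [this, map_mul]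
    exact PP_mul hq hq'

theorem posL_add {b : Fin n → K} {x y : RatFuncField K n} (hx : PosL b x) (hy : PosL b y) :
    PosL b (x + y) := by
  obtain ⟨q, r, hr, hxe, hq⟩ := hx
  obtain ⟨q', r', hr', hye, hq'⟩ := hy
  refine ⟨q * r' + q' * r, r * r', mul_ne_zero hr hr', ?_, ?_⟩
  · rw [hxe, hye, div_add_div _ _ (algMap_ne_zero hr) (algMap_ne_zero hr')]
    rw [map_add, map_mul, map_mul, map_mul]
    ring_nf
  · have h2 : shiftMap b ((q * r' + q' * r) * (r * r')) =
        shiftMap b (q * r) * (shiftMap b r' * shiftMap b r') +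
        shiftMap b (q' * r') * (shiftMap b r * shiftMap b r) := by
      simp only [← map_mul, ← map_add]
      congr 1
      ring
    rw [h2]
    exact PP_add (PP_mul hq (PP_sq (shiftMap_ne_zero hr')))
      (PP_mul hq' (PP_sq (shiftMap_ne_zero hr)))

theorem posL_sq {b : Fin n → K} {x : RatFuncField K n} (hx : x ≠ 0) : PosL b (x * x) := by
  obtain ⟨q, r, hrm, hxe⟩ := IsFractionRing.div_surjective (A := MvPolynomial (Fin n) K) x
  have hr : r ≠ 0 := nonZeroDivisors.ne_zero hrm
  have hq : q ≠ 0 := by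
    intro h
    apply hx
    rw [← hxe, h, (algebraMap (MvPolynomial (Fin n) K) (RatFuncField K n)).map_zero, zero_div]
  refine ⟨q * q, r * r, mul_ne_zero hr hr, ?_, ?_⟩
  · rw [← hxe, map_mul, map_mul]
    ring
  · have : q * q * (r * r) = (q * r) * (q * r) := by ring
    rw [this, map_mul]
    exact PP_sq (shiftMap_ne_zero (mul_ne_zero hq hr))

theorem not_posL_neg_one {b : Fin n → K} : ¬ PosL b (-1 : RatFuncField K n) := by
  rintro ⟨q, r, hr, he, hq⟩
  have h : (algebraMap (MvPolynomial (Fin n) K) (RatFuncField K n)) q =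
      -1 * algebraMap (MvPolynomial (Fin n) K) (RatFuncField K n) r := by
    rw [← div_eq_iff (algMap_ne_zero hr)]
    exact he.symm
  have hqr : q = -r := by
    apply IsFractionRing.injective (MvPolynomial (Fin n) K) (RatFuncField K n)
    rw [map_neg, h]
    ring
  rw [hqr] at hq
  have : -r * r = -(r * r) := by ring
  rw [this, map_neg, map_mul] at hq
  exact not_PP_neg_sq (shiftMap_ne_zero hr) hq

theorem posL_algebraMap {b : Fin n → K} {q : MvPolynomial (Fin n) K} (hq : 0 < eval b q) :
    PosL b (algebraMap (MvPolynomial (Fin n) K) (RatFuncField K n) q) := by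
  refine ⟨q, 1, one_ne_zero, by rw [map_one, div_one], ?_⟩
  rw [mul_one]
  have h0 : MvPolynomial.coeff 0 (shiftMap b q) ≠ 0 := by
    rw [coeff_zero_shiftMap]; exact ne_of_gt hq
  constructor
  · intro h
    apply h0
    rw [h, MvPolynomial.coeff_zero]
  · rw [lcf_of_constantCoeff_ne_zero h0, coeff_zero_shiftMap]
    exact hq

theorem posL_of_inCone {m : ℕ} {p : Fin m → MvPolynomial (Fin n) K} {b : Fin n → K}
    (hb : ∀ i, 0 < eval b (p i)) {f : RatFuncField K n}
    (hf : InCone (Set.range fun i =>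
      algebraMap (MvPolynomial (Fin n) K) (RatFuncField K n) (p i)) f) :
    PosL b f := by
  induction hf with
  | mem x hx => obtain ⟨i, rfl⟩ := hx; exact posL_algebraMap (hb i)
  | sq x hx => exact posL_sq hx
  | add x y _ _ ihx ihy => exact posL_add ihx ihy
  | mul x y _ _ ihx ihy => exact posL_mul ihx ihy

theorem neg_one_not_inCone {m : ℕ} {p : Fin m → MvPolynomial (Fin n) K} {b : Fin n → K}
    (hb : ∀ i, 0 < eval b (p i)) :
    ¬ InCone (Set.range fun i =>
      algebraMap (MvPolynomial (Fin n) K) (RatFuncField K n) (p i)) (-1) :=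
  fun h => not_posL_neg_one (posL_of_inCone hb h)

end S9



namespace S9

variable {K : Type u} [Field K] [LinearOrder K] [IsStrictOrderedRing K] {Γ₀ : Type v} [LinearOrderedCommGroupWithZero Γ₀]
  {n m : ℕ} {Γ : Type w} [LinearOrderedCommGroupWithZero Γ]

/-- The set of images of the `p i` inside the rational function field. -/
abbrev coneSet (p : Fin m → MvPolynomial (Fin n) K) : Set (RatFuncField K n) :=
  Set.range fun i => algebraMap (MvPolynomial (Fin n) K) (RatFuncField K n) (p i)

theorem one_add_ne_zero {p : Fin m → MvPolynomial (Fin n) K}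
    (hnc : ¬ InCone (coneSet p) (-1)) {f : RatFuncField K n}
    (hf : InCone (coneSet p) f) : (1 : RatFuncField K n) + f ≠ 0 := by
  intro h0
  apply hnc
  have : f = -1 := by linear_combination h0
  rwa [this] at hf

theorem one_inCone {p : Fin m → MvPolynomial (Fin n) K} :
    InCone (coneSet p) (1 : RatFuncField K n) :=
  one_mul (1 : RatFuncField K n) ▸ InCone.sq 1 one_ne_zero

theorem wt_inv_one_add_le (ν : Valuation K Γ₀) {p : Fin m → MvPolynomial (Fin n) K}
    {wt : Valuation (RatFuncField K n) Γ}
    (hA : ∀ x ∈ OAlgebraGen ν (SetIP p), wt x ≤ 1)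
    {f : RatFuncField K n} (hf : InCone (coneSet p) f) :
    wt ((1 + f)⁻¹) ≤ 1 :=
  hA _ (Subring.subset_closure (Or.inr ⟨f, hf, rfl⟩))

theorem sum_inCone {P : Set (RatFuncField K n)} :
    ∀ l : List (RatFuncField K n), l ≠ [] → (∀ x ∈ l, InCone P x) → InCone P l.sum := by
  intro l
  induction l with
  | nil => intro h; exact absurd rfl h
  | cons x xs ih =>
    intro _ h
    rcases eq_or_ne xs [] with rfl | hne
    · simpa using h x (by simp)
    · rw [List.sum_cons]
      exact InCone.add _ _ (h x (by simp)) (ih hne fun y hy => h y (List.mem_cons_of_mem _ hy))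

/-- Key estimate: if `F = f + G` with `f, F` (and `G`) in the cone, then
`f/(1+F)` is in the valuation ring. -/
theorem wt_mul_inv_one_add_le (ν : Valuation K Γ₀) {p : Fin m → MvPolynomial (Fin n) K}
    {wt : Valuation (RatFuncField K n) Γ}
    (hA : ∀ x ∈ OAlgebraGen ν (SetIP p), wt x ≤ 1)
    (hnc : ¬ InCone (coneSet p) (-1))
    {f F G : RatFuncField K n} (hf : InCone (coneSet p) f) (hF : InCone (coneSet p) F)
    (hG : G = 0 ∨ InCone (coneSet p) G) (hFG : F = f + G) :
    wt (f * (1 + F)⁻¹) ≤ 1 := by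
  have h1f : (1 : RatFuncField K n) + f ≠ 0 := one_add_ne_zero hnc hf
  have h1F : (1 : RatFuncField K n) + F ≠ 0 := one_add_ne_zero hnc hF
  have h2 : wt ((1 + F)⁻¹) ≤ 1 := wt_inv_one_add_le ν hA hF
  rcases hG with rfl | hG
  · rw [add_zero] at hFG
    subst hFG
    have key : F * (1 + F)⁻¹ = 1 - (1 + F)⁻¹ := by
      field_simp
      ring
    rw [key]
    exact le_trans (Valuation.map_sub wt _ _) (max_le (le_of_eq wt.map_one) h2)
  · set H := (G + G * f) * ((1 + f)⁻¹ * (1 + f)⁻¹) with hHdef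
    have hH : InCone (coneSet p) H :=
      InCone.mul _ _ (InCone.add _ _ hG (InCone.mul _ _ hG hf))
        (InCone.sq _ (inv_ne_zero h1f))
    have h1H : (1 : RatFuncField K n) + H = (1 + F) * (1 + f)⁻¹ := by
      rw [hHdef, hFG]
      field_simp
      ring
    have hinv : (1 + H)⁻¹ = (1 + f) * (1 + F)⁻¹ := by
      rw [h1H, mul_inv, inv_inv, mul_comm]
    have key : f * (1 + F)⁻¹ = (1 + H)⁻¹ - (1 + F)⁻¹ := by
      rw [hinv]; ring
    rw [key]
    exact le_trans (Valuation.map_sub wt _ _)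
      (max_le (wt_inv_one_add_le ν hA hH) h2)

theorem sum_map_pair (a : RatFuncField K n × RatFuncField K n)
    (l : List (RatFuncField K n × RatFuncField K n)) :
    ((l.map fun c => (a.1 * c.1, a.2 + c.2 + a.2 * c.2)).map fun fz => fz.1 * (1 + fz.2)).sum
      = (a.1 * (1 + a.2)) * ((l.map fun fz => fz.1 * (1 + fz.2)).sum) := by
  induction l with
  | nil => simp
  | cons c l ih => simp only [List.map_cons, List.sum_cons, ih]; ring

theorem sum_map_flatMap (l₁ l₂ : List (RatFuncField K n × RatFuncField K n)) :
    (((l₁.flatMap fun a => l₂.map fun c => (a.1 * c.1, a.2 + c.2 + a.2 * c.2)).map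
        fun fz => fz.1 * (1 + fz.2)).sum)
      = ((l₁.map fun fz => fz.1 * (1 + fz.2)).sum) *
        ((l₂.map fun fz => fz.1 * (1 + fz.2)).sum) := by
  induction l₁ with
  | nil => simp
  | cons a l₁ ih =>
    rw [List.flatMap_cons, List.map_append, List.sum_append, ih, List.map_cons, List.sum_cons,
      sum_map_pair]
    ring

theorem sum_split (l : List (RatFuncField K n × RatFuncField K n)) :
    (l.map fun fz => fz.1 * (1 + fz.2)).sum
      = (l.map Prod.fst).sum + (l.map fun fz => fz.1 * fz.2).sum := by
  induction l with
  | nil => simp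
  | cons a l ih => simp only [List.map_cons, List.sum_cons, ih]; ring

theorem sum_map_mul_right' (l : List (RatFuncField K n × RatFuncField K n))
    (c : RatFuncField K n) :
    ((l.map fun fz => fz.1 * fz.2).sum) * c = (l.map fun fz => fz.1 * fz.2 * c).sum := by
  induction l with
  | nil => simp
  | cons a l ih => simp only [List.map_cons, List.sum_cons, add_mul, ih]

theorem wt_sum_lt_one {wt : Valuation (RatFuncField K n) Γ} :
    ∀ l : List (RatFuncField K n), (∀ x ∈ l, wt x < 1) → wt l.sum < 1 := by
  intro l
  induction l with
  | nil => intro _; rw [List.sum_nil, wt.map_zero]; exact zero_lt_one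
  | cons x xs ih =>
    intro h
    rw [List.sum_cons]
    refine lt_of_le_of_lt (wt.map_add _ _) (max_lt (h x (by simp)) ?_)
    exact ih fun y hy => h y (List.mem_cons_of_mem _ hy)

/-- Every element of the cone generated by the `p i` and `1 + 𝔪` has a standard
representation as `∑ fⱼ (1 + zⱼ)`. -/
theorem repr_of_inCone {p : Fin m → MvPolynomial (Fin n) K}
    {wt : Valuation (RatFuncField K n) Γ} {t : RatFuncField K n}
    (ht : InCone (coneSet p ∪ {t | ∃ z, wt z < 1 ∧ t = 1 + z}) t) :
    ∃ l : List (RatFuncField K n × RatFuncField K n), l ≠ [] ∧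
      (∀ fz ∈ l, InCone (coneSet p) fz.1 ∧ wt fz.2 < 1) ∧
      t = (l.map fun fz => fz.1 * (1 + fz.2)).sum := by
  induction ht with
  | mem x hx =>
    rcases hx with hx | ⟨z, hz, rfl⟩
    · refine ⟨[(x, 0)], by simp, ?_, by simp⟩
      intro fz hfz
      rw [List.mem_singleton] at hfz
      subst hfz
      exact ⟨InCone.mem x hx, by rw [wt.map_zero]; exact zero_lt_one⟩
    · refine ⟨[(1, z)], by simp, ?_, by simp⟩
      intro fz hfz
      rw [List.mem_singleton] at hfz
      subst hfz
      exact ⟨one_inCone, hz⟩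
  | sq x hx =>
    refine ⟨[(x * x, 0)], by simp, ?_, by simp⟩
    intro fz hfz
    rw [List.mem_singleton] at hfz
    subst hfz
    exact ⟨InCone.sq x hx, by rw [wt.map_zero]; exact zero_lt_one⟩
  | add x y _ _ ihx ihy =>
    obtain ⟨l₁, h1, h2, h3⟩ := ihx
    obtain ⟨l₂, h4, h5, h6⟩ := ihy
    refine ⟨l₁ ++ l₂, by simp [h1], ?_, ?_⟩
    · intro fz hfz
      rcases List.mem_append.mp hfz with h | h
      · exact h2 fz h
      · exact h5 fz h
    · rw [List.map_append, List.sum_append, h3, h6]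
  | mul x y _ _ ihx ihy =>
    obtain ⟨l₁, h1, h2, h3⟩ := ihx
    obtain ⟨l₂, h4, h5, h6⟩ := ihy
    obtain ⟨a, ha⟩ := List.exists_mem_of_ne_nil l₁ h1
    obtain ⟨c, hc⟩ := List.exists_mem_of_ne_nil l₂ h4
    refine ⟨l₁.flatMap fun a => l₂.map fun c => (a.1 * c.1, a.2 + c.2 + a.2 * c.2),
      List.ne_nil_of_mem (List.mem_flatMap.mpr
        ⟨a, ha, List.mem_map.mpr ⟨c, hc, rfl⟩⟩), ?_, ?_⟩
    · intro fz hfz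
      obtain ⟨u, hu, hv⟩ := List.mem_flatMap.mp hfz
      obtain ⟨v, hv', rfl⟩ := List.mem_map.mp hv
      refine ⟨InCone.mul _ _ (h2 u hu).1 (h5 v hv').1, ?_⟩
      have hu2 := (h2 u hu).2
      have hv2 := (h5 v hv').2
      calc wt (u.2 + v.2 + u.2 * v.2) ≤ max (max (wt u.2) (wt v.2)) (wt (u.2 * v.2)) :=
            le_trans (wt.map_add _ _) (max_le_max (wt.map_add _ _) le_rfl)
        _ < 1 := by
            refine max_lt (max_lt hu2 hv2) ?_
            rw [wt.map_mul]
            calc wt u.2 * wt v.2 ≤ wt u.2 * 1 := mul_le_mul_right hv2.le _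
              _ = wt u.2 := mul_one _
              _ < 1 := hu2
    · rw [h3, h6, sum_map_flatMap]

/-- Step A: `-1` is not in the cone generated by the `pᵢ` and `1 + 𝔪_wt`. -/
theorem neg_one_not_inCone_D (ν : Valuation K Γ₀) {p : Fin m → MvPolynomial (Fin n) K}
    {b : Fin n → K} (hb : ∀ i, 0 < eval b (p i))
    {wt : Valuation (RatFuncField K n) Γ}
    (hA : ∀ x ∈ OAlgebraGen ν (SetIP p), wt x ≤ 1) :
    ¬ InCone (coneSet p ∪ {t | ∃ z, wt z < 1 ∧ t = 1 + z}) (-1 : RatFuncField K n) := by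
  classical
  intro h
  have hnc : ¬ InCone (coneSet p) (-1 : RatFuncField K n) := neg_one_not_inCone hb
  obtain ⟨l, hlne, hmem, hsum⟩ := repr_of_inCone h
  set F := (l.map Prod.fst).sum with hFdef
  have hF : InCone (coneSet p) F :=
    sum_inCone _ (by simpa using hlne) (by
      intro x hx
      obtain ⟨fz, hfz, rfl⟩ := List.mem_map.mp hx
      exact (hmem fz hfz).1)
  have h1F : (1 : RatFuncField K n) + F ≠ 0 := one_add_ne_zero hnc hF
  have hZeq : (l.map fun fz => fz.1 * fz.2).sum = -(1 + F) := by
    have := hsum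
    rw [sum_split, ← hFdef] at this
    linear_combination -this
  have hlt : wt ((l.map fun fz => fz.1 * fz.2).sum * (1 + F)⁻¹) < 1 := by
    rw [sum_map_mul_right']
    apply wt_sum_lt_one
    intro x hx
    obtain ⟨fz, hfz, rfl⟩ := List.mem_map.mp hx
    obtain ⟨l', hperm⟩ : ∃ l', l.Perm (fz :: l') :=
      ⟨l.erase fz, List.perm_cons_erase hfz⟩
    have hFsplit : F = fz.1 + (l'.map Prod.fst).sum := by
      rw [hFdef, (hperm.map Prod.fst).sum_eq, List.map_cons, List.sum_cons]
    have hG : (l'.map Prod.fst).sum = 0 ∨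
        InCone (coneSet p) (l'.map Prod.fst).sum := by
      rcases eq_or_ne l' [] with he | he
      · left; rw [he]; simp
      · right
        exact sum_inCone _ (by simpa using he) (by
          intro y hy
          obtain ⟨gz, hgz, rfl⟩ := List.mem_map.mp hy
          exact (hmem gz (hperm.mem_iff.mpr (List.mem_cons_of_mem _ hgz))).1)
    have hkey := wt_mul_inv_one_add_le ν hA hnc (hmem fz hfz).1 hF hG hFsplit
    have heq : fz.1 * fz.2 * (1 + F)⁻¹ = fz.2 * (fz.1 * (1 + F)⁻¹) := by ring
    rw [heq, wt.map_mul]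
    calc wt fz.2 * wt (fz.1 * (1 + F)⁻¹) ≤ wt fz.2 * 1 := mul_le_mul_right hkey _
      _ = wt fz.2 := mul_one _
      _ < 1 := (hmem fz hfz).2
  have hne : (l.map fun fz => fz.1 * fz.2).sum * (1 + F)⁻¹ = -1 := by
    rw [hZeq, neg_mul, mul_inv_cancel₀ h1F]
  rw [hne, wt.map_neg, wt.map_one] at hlt
  exact lt_irrefl _ hlt

end S9


namespace S9

variable {K : Type u} [Field K] [LinearOrder K] [IsStrictOrderedRing K] {Γ₀ : Type v} [LinearOrderedCommGroupWithZero Γ₀]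
  {n m : ℕ} {Γ : Type w} [LinearOrderedCommGroupWithZero Γ]

/-- A (proper) precone of the rational function field. -/
def IsPrecone (Q : Set (RatFuncField K n)) : Prop :=
  0 ∈ Q ∧ (∀ x : RatFuncField K n, x ≠ 0 → x * x ∈ Q) ∧
    (∀ x ∈ Q, ∀ y ∈ Q, x + y ∈ Q) ∧ (∀ x ∈ Q, ∀ y ∈ Q, x * y ∈ Q) ∧
    (-1 : RatFuncField K n) ∉ Q

theorem isPrecone_base {D : Set (RatFuncField K n)} (hD : ¬ InCone D (-1)) :
    IsPrecone {x : RatFuncField K n | x = 0 ∨ InCone D x} := by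
  refine ⟨Or.inl rfl, fun x hx => Or.inr (InCone.sq x hx), ?_, ?_, ?_⟩
  · rintro x (rfl | hx) y (rfl | hy)
    · exact Or.inl (by ring)
    · exact Or.inr (by rwa [zero_add])
    · exact Or.inr (by rwa [add_zero])
    · exact Or.inr (InCone.add _ _ hx hy)
  · rintro x (rfl | hx) y (rfl | hy)
    · exact Or.inl (by ring)
    · exact Or.inl (by ring)
    · exact Or.inl (by ring)
    · exact Or.inr (InCone.mul _ _ hx hy)
  · rintro (h | h)
    · exact neg_ne_zero.mpr one_ne_zero h
    · exact hD h

theorem exists_maximal_precone {D : Set (RatFuncField K n)} (hD : ¬ InCone D (-1)) :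
    ∃ M : Set (RatFuncField K n),
      {x : RatFuncField K n | x = 0 ∨ InCone D x} ⊆ M ∧ Maximal IsPrecone M := by
  obtain ⟨M, hM1, hM2⟩ := zorn_subset_nonempty {Q : Set (RatFuncField K n) | IsPrecone Q}
    (fun c hc hchain hcne => by
      obtain ⟨Q, hQ⟩ := hcne
      refine ⟨⋃₀ c, ⟨⟨Q, hQ, (hc hQ).1⟩, fun x hx => ⟨Q, hQ, (hc hQ).2.1 x hx⟩, ?_, ?_, ?_⟩,
        fun s hs => Set.subset_sUnion_of_mem hs⟩
      · rintro x ⟨Q₁, hQ₁, hx⟩ y ⟨Q₂, hQ₂, hy⟩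
        rcases hchain.total hQ₁ hQ₂ with h | h
        · exact ⟨Q₂, hQ₂, (hc hQ₂).2.2.1 x (h hx) y hy⟩
        · exact ⟨Q₁, hQ₁, (hc hQ₁).2.2.1 x hx y (h hy)⟩
      · rintro x ⟨Q₁, hQ₁, hx⟩ y ⟨Q₂, hQ₂, hy⟩
        rcases hchain.total hQ₁ hQ₂ with h | h
        · exact ⟨Q₂, hQ₂, (hc hQ₂).2.2.2.1 x (h hx) y hy⟩
        · exact ⟨Q₁, hQ₁, (hc hQ₁).2.2.2.1 x hx y (h hy)⟩
      · rintro ⟨Q₁, hQ₁, hx⟩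
        exact (hc hQ₁).2.2.2.2 hx)
    _ (isPrecone_base hD)
  exact ⟨M, hM1, hM2⟩

theorem one_mem_precone {M : Set (RatFuncField K n)} (hM : IsPrecone M) :
    (1 : RatFuncField K n) ∈ M := by
  have := hM.2.1 1 one_ne_zero
  rwa [one_mul] at this

theorem maximal_precone_total {M : Set (RatFuncField K n)} (hM : Maximal IsPrecone M) :
    ∀ x : RatFuncField K n, x ∈ M ∨ -x ∈ M := by
  intro x
  rcases eq_or_ne x 0 with rfl | hx0
  · exact Or.inl hM.1.1
  by_contra hcon
  push_neg at hcon
  obtain ⟨hx, hnx⟩ := hcon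
  have key : ∀ y : RatFuncField K n, y ≠ 0 → y ∉ M →
      ∃ a ∈ M, ∃ b ∈ M, (-1 : RatFuncField K n) = a + y * b := by
    intro y hy hyM
    by_contra hcon2
    push_neg at hcon2
    have hpre : IsPrecone {t : RatFuncField K n | ∃ a ∈ M, ∃ b ∈ M, t = a + y * b} := by
      refine ⟨⟨0, hM.1.1, 0, hM.1.1, by ring⟩,
        fun z hz => ⟨z * z, hM.1.2.1 z hz, 0, hM.1.1, by ring⟩, ?_, ?_, ?_⟩
      · rintro s ⟨a, ha, b, hb, rfl⟩ t ⟨a', ha', b', hb', rfl⟩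
        exact ⟨a + a', hM.1.2.2.1 a ha a' ha', b + b', hM.1.2.2.1 b hb b' hb', by ring⟩
      · rintro s ⟨a, ha, b, hb, rfl⟩ t ⟨a', ha', b', hb', rfl⟩
        refine ⟨a * a' + (y * y) * (b * b'),
          hM.1.2.2.1 _ (hM.1.2.2.2.1 a ha a' ha')
            _ (hM.1.2.2.2.1 _ (hM.1.2.1 y hy) _ (hM.1.2.2.2.1 b hb b' hb')),
          a * b' + a' * b,
          hM.1.2.2.1 _ (hM.1.2.2.2.1 a ha b' hb') _ (hM.1.2.2.2.1 a' ha' b hb), by ring⟩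
      · rintro ⟨a, ha, b, hb, heq⟩
        exact hcon2 a ha b hb heq
    have hsub : M ⊆ {t : RatFuncField K n | ∃ a ∈ M, ∃ b ∈ M, t = a + y * b} :=
      fun t ht => ⟨t, ht, 0, hM.1.1, by ring⟩
    have hrev := hM.2 hpre hsub
    exact hyM (hrev ⟨0, hM.1.1, 1, one_mem_precone hM.1, by ring⟩)
  obtain ⟨a, ha, b, hb, h1⟩ := key x hx0 hx
  obtain ⟨c, hc, d, hd, h2⟩ := key (-x) (neg_ne_zero.mpr hx0) hnx
  have heq : (-1 : RatFuncField K n) = (a + c + a * c) + (x * x) * (b * d) := by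
    linear_combination (x * d) * h1 + (1 + a) * h2
  apply hM.1.2.2.2.2
  rw [heq]
  exact hM.1.2.2.1 _ (hM.1.2.2.1 _ (hM.1.2.2.1 a ha c hc) _ (hM.1.2.2.2.1 a ha c hc))
    _ (hM.1.2.2.2.1 _ (hM.1.2.1 x hx0) _ (hM.1.2.2.2.1 b hb d hd))

end S9

/-- If `ν̃` extends `ν` to `L = K(x₁,…,xₙ)` with `A_p̄ ⊆ O_ν̃`, there is an
ordering of `L` compatible with `ν̃` in which all the `p_i` are nonnegative. -/
theorem exists_compatible_ordering {K : Type u} [Field K] [LinearOrder K] [IsStrictOrderedRing K] {Γ₀ : Type v}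
    [LinearOrderedCommGroupWithZero Γ₀] (ν : Valuation K Γ₀) (hK : IsRCVF ν)
    {n m : ℕ} (p : Fin m → MvPolynomial (Fin n) K) (hS : (SetSP p).Nonempty)
    {Γ : Type w} [LinearOrderedCommGroupWithZero Γ]
    (wt : Valuation (RatFuncField K n) Γ) (hext : ValExtends ν wt)
    (hA : ∀ x ∈ OAlgebraGen ν (SetIP p), wt x ≤ 1) :
    ∃ OL : FieldOrdering (RatFuncField K n), OL.IsCompatible wt ∧
      ∀ i, algebraMap (MvPolynomial (Fin n) K) (RatFuncField K n) (p i) ∈ OL.P := by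
  classical
  obtain ⟨b, hb⟩ := hS
  simp only [SetSP, Set.mem_setOf_eq] at hb
  set D : Set (RatFuncField K n) :=
    S9.coneSet p ∪ {t | ∃ z, wt z < 1 ∧ t = 1 + z} with hDdef
  have hD : ¬ InCone D (-1 : RatFuncField K n) := S9.neg_one_not_inCone_D ν hb hA
  obtain ⟨M, hQ₀M, hM⟩ := S9.exists_maximal_precone hD
  obtain ⟨h0M, hsqM, haddM, hmulM, hn1M⟩ := hM.1
  refine ⟨⟨M, haddM, hmulM, ?_, hn1M, S9.maximal_precone_total hM⟩, ?_, ?_⟩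
  · intro x
    rcases eq_or_ne x 0 with rfl | hx
    · rwa [mul_zero]
    · exact hsqM x hx
  · -- compatibility
    intro x y hx hxy
    by_contra hle
    push_neg at hle
    have hx0 : x ≠ 0 := hx.2
    have hwx : wt x ≠ 0 := (Valuation.ne_zero_iff wt).mpr hx0
    have hu : wt (-(y * x⁻¹)) < 1 := by
      rw [wt.map_neg, wt.map_mul, map_inv₀]
      have h3 := mul_lt_mul_of_pos_left hle (zero_lt_iff.mpr (inv_ne_zero hwx))
      rwa [inv_mul_cancel₀ hwx, mul_comm] at h3
    have h1u : (1 : RatFuncField K n) + -(y * x⁻¹) ∈ M :=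
      hQ₀M (Or.inr (InCone.mem _ (Or.inr ⟨-(y * x⁻¹), hu, rfl⟩)))
    have hcM : y * x⁻¹ - 1 ∈ M := by
      have heq : y * x⁻¹ - 1 = ((y - x) * x) * (x⁻¹ * x⁻¹) := by
        field_simp
      rw [heq]
      exact hmulM _ (hmulM _ hxy.1 _ hx.1) _ (hsqM _ (inv_ne_zero hx0))
    have hncM : -(y * x⁻¹ - 1) ∈ M := by
      have heq : -(y * x⁻¹ - 1) = 1 + -(y * x⁻¹) := by ring
      rw [heq]; exact h1u
    have hc0 : y * x⁻¹ - 1 ≠ 0 := by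
      intro h
      apply hxy.2
      have heq : y - x = (y * x⁻¹ - 1) * x := by field_simp
      rw [heq, h, zero_mul]
    apply hn1M
    have hyx : y - x ≠ 0 := hxy.2
    have heq : (-1 : RatFuncField K n) = ((y * x⁻¹ - 1) * (-(y * x⁻¹ - 1))) *
        ((y * x⁻¹ - 1)⁻¹ * (y * x⁻¹ - 1)⁻¹) := by
      have hc0' : y * x⁻¹ - 1 ≠ 0 := hc0
      field_simp
    rw [heq]
    exact hmulM _ (hmulM _ hcM _ hncM) _ (hsqM _ (inv_ne_zero hc0))
  · intro i
    exact hQ₀M (Or.inr (InCone.mem _ (Or.inl ⟨i, rfl⟩)))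
end
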